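/- Let A be a unital C*-algebra with tracial states τ and ρ, and suppose both τ and ρ arise as weak* limits of normalized matrix traces along topological-distribution-convergent microstate sequences for a fixed generating tuple (x₁,…,x_n) (i.e., τ, ρ ∈ T_MF(A)). Then for every rational number q ∈ [0,1], q·τ + (1−q)·ρ ∈ T_MF(A). -/

import Mathlib

open scoped Matrix.Norms.L2Operator

/-- Evaluation of a noncommutative *-polynomial at a tuple. -/
noncomputable def evalStarPoly {A : Type*} [Ring A] [Algebra ℂ A] [StarRing A]
    {n : ℕ} (x : Fin n → A) (p : FreeAlgebra ℂ (Fin n × Bool)) : A :=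
  FreeAlgebra.lift ℂ (fun q : Fin n × Bool => if q.2 then star (x q.1) else x q.1) p

open scoped Kronecker

lemma evalStarPoly_map {A B : Type*} [Ring A] [Algebra ℂ A] [StarRing A]
    [Ring B] [Algebra ℂ B] [StarRing B]
    (f : A →⋆ₐ[ℂ] B) {n : ℕ} (x : Fin n → A) (p : FreeAlgebra ℂ (Fin n × Bool)) :
    f (evalStarPoly x p) = evalStarPoly (fun i => f (x i)) p := by
  induction p using FreeAlgebra.induction with
  | grade0 r => simp only [evalStarPoly, AlgHom.commutes, AlgHomClass.commutes]
  | grade1 z => simp [evalStarPoly, apply_ite f, map_star]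
  | mul a b ha hb => simp only [evalStarPoly, map_mul] at *; rw [ha, hb]
  | add a b ha hb => simp only [evalStarPoly, map_add] at *; rw [ha, hb]

lemma evalStarPoly_prod {A B : Type*} [Ring A] [Algebra ℂ A] [StarRing A]
    [Ring B] [Algebra ℂ B] [StarRing B]
    {n : ℕ} (x : Fin n → A) (y : Fin n → B) (p : FreeAlgebra ℂ (Fin n × Bool)) :
    evalStarPoly (fun i => (x i, y i)) p = (evalStarPoly x p, evalStarPoly y p) := by
  ext
  · simpa using (evalStarPoly_map (StarAlgHom.fst ℂ A B) (fun i => (x i, y i)) p)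
  · simpa using (evalStarPoly_map (StarAlgHom.snd ℂ A B) (fun i => (x i, y i)) p)

open Matrix in
lemma kronecker_conjTranspose' {l m n p : Type*} (M : Matrix l m ℂ) (N : Matrix n p ℂ) :
    (M ⊗ₖ N)ᴴ = Mᴴ ⊗ₖ Nᴴ := by
  ext ⟨i, j⟩ ⟨a, b⟩
  simp [Matrix.conjTranspose_apply, Matrix.kroneckerMap_apply, star_mul']

/-- `Matrix.reindex` as a star-algebra equivalence. -/
noncomputable def matrixReindexStarAlgEquiv {m n : Type*} [Fintype m] [DecidableEq m]
    [Fintype n] [DecidableEq n] (e : m ≃ n) :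
    Matrix m m ℂ ≃⋆ₐ[ℂ] Matrix n n ℂ :=
  { Matrix.reindexAlgEquiv ℂ ℂ e with
    map_star' := fun M => by
      show Matrix.reindex e e (star M) = star (Matrix.reindex e e M)
      simp only [Matrix.star_eq_conjTranspose, Matrix.conjTranspose_reindex]
    map_smul' := fun c M => by
      show Matrix.reindex e e (c • M) = c • Matrix.reindex e e M
      ext i j
      simp }

/-- The block function. -/
noncomputable def blockFun (m1 m2 u w : ℕ)
    (P : Matrix (Fin m1) (Fin m1) ℂ × Matrix (Fin m2) (Fin m2) ℂ) :
    (Fin u ⊕ Fin w) → Matrix (Fin m1 × Fin m2) (Fin m1 × Fin m2) ℂ :=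
  Sum.elim (fun _ => P.1 ⊗ₖ (1 : Matrix (Fin m2) (Fin m2) ℂ))
    (fun _ => (1 : Matrix (Fin m1) (Fin m1) ℂ) ⊗ₖ P.2)

lemma blockFun_one (m1 m2 u w : ℕ) :
    blockFun m1 m2 u w 1 = 1 := by
  funext o
  cases o <;> simp [blockFun, Matrix.one_kronecker_one]

lemma blockFun_mul (m1 m2 u w : ℕ) (P Q) :
    blockFun m1 m2 u w (P * Q) = fun k => blockFun m1 m2 u w P k * blockFun m1 m2 u w Q k := by
  funext o
  cases o <;>
    simp [blockFun, ← Matrix.mul_kronecker_mul]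

lemma blockFun_add (m1 m2 u w : ℕ) (P Q) :
    blockFun m1 m2 u w (P + Q) = blockFun m1 m2 u w P + blockFun m1 m2 u w Q := by
  funext o
  cases o <;> simp [blockFun, Matrix.add_kronecker, Matrix.kronecker_add]

lemma blockFun_smul (m1 m2 u w : ℕ) (c : ℂ) (P) :
    blockFun m1 m2 u w (c • P) = c • blockFun m1 m2 u w P := by
  funext o
  cases o <;> simp [blockFun, Matrix.smul_kronecker, Matrix.kronecker_smul]

lemma blockFun_star (m1 m2 u w : ℕ) (P) :
    blockFun m1 m2 u w (star P) = fun k => star (blockFun m1 m2 u w P k) := by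
  funext o
  cases o <;>
    simp [blockFun, Matrix.star_eq_conjTranspose, kronecker_conjTranspose']

/-- Block-diagonal embedding of a pair of matrix algebras, with multiplicities `u` and `w`. -/
noncomputable def pairBlockHom (m1 m2 u w : ℕ) :
    (Matrix (Fin m1) (Fin m1) ℂ × Matrix (Fin m2) (Fin m2) ℂ) →⋆ₐ[ℂ]
      Matrix ((Fin m1 × Fin m2) × (Fin u ⊕ Fin w)) ((Fin m1 × Fin m2) × (Fin u ⊕ Fin w)) ℂ where
  toFun P := Matrix.blockDiagonal (blockFun m1 m2 u w P)
  map_one' := by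
    show Matrix.blockDiagonal (blockFun m1 m2 u w 1) = 1
    rw [blockFun_one, Matrix.blockDiagonal_one]
  map_mul' P Q := by
    show Matrix.blockDiagonal (blockFun m1 m2 u w (P * Q)) = _ * _
    rw [blockFun_mul, Matrix.blockDiagonal_mul]
  map_zero' := by
    have h : blockFun m1 m2 u w 0 = 0 := by
      funext o; cases o <;> simp [blockFun]
    show Matrix.blockDiagonal (blockFun m1 m2 u w 0) = 0
    rw [h, Matrix.blockDiagonal_zero]
  map_add' P Q := by
    show Matrix.blockDiagonal (blockFun m1 m2 u w (P + Q)) = _ + _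
    rw [blockFun_add, Matrix.blockDiagonal_add]
  commutes' c := by
    show Matrix.blockDiagonal (blockFun m1 m2 u w (algebraMap ℂ _ c)) = _
    rw [Algebra.algebraMap_eq_smul_one, blockFun_smul, Matrix.blockDiagonal_smul,
      blockFun_one, Matrix.blockDiagonal_one, Algebra.algebraMap_eq_smul_one]
  map_star' P := by
    show Matrix.blockDiagonal (blockFun m1 m2 u w (star P)) = _
    rw [blockFun_star, Matrix.star_eq_conjTranspose, Matrix.blockDiagonal_conjTranspose]
    rfl
noncomputable instance matFinCStar (N : ℕ) : CStarAlgebra (Matrix (Fin N) (Fin N) ℂ) where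

noncomputable instance matFinProdCStar (N M : ℕ) :
    CStarAlgebra (Matrix (Fin N) (Fin N) ℂ × Matrix (Fin M) (Fin M) ℂ) where

/-- The index equivalence. -/
def bigIdx (m1 m2 u w : ℕ) :
    ((Fin m1 × Fin m2) × (Fin u ⊕ Fin w)) ≃ Fin (m1 * m2 * (u + w)) :=
  (Equiv.prodCongr finProdFinEquiv finSumFinEquiv).trans finProdFinEquiv

/-- The combined embedding, landing in honest `Fin`-indexed matrices. -/
noncomputable def bigEmbed (m1 m2 u w : ℕ) :
    (Matrix (Fin m1) (Fin m1) ℂ × Matrix (Fin m2) (Fin m2) ℂ) →⋆ₐ[ℂ]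
      Matrix (Fin (m1 * m2 * (u + w))) (Fin (m1 * m2 * (u + w))) ℂ :=
  StarAlgHom.comp
    (StarAlgHomClass.toStarAlgHom (matrixReindexStarAlgEquiv (bigIdx m1 m2 u w)))
    (pairBlockHom m1 m2 u w)

lemma bigEmbed_apply (m1 m2 u w : ℕ) (P) :
    bigEmbed m1 m2 u w P =
      Matrix.reindex (bigIdx m1 m2 u w) (bigIdx m1 m2 u w)
        (Matrix.blockDiagonal (blockFun m1 m2 u w P)) := rfl

lemma trace_reindex' {m n : Type*} [Fintype m] [Fintype n] (e : m ≃ n) (M : Matrix m m ℂ) :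
    Matrix.trace (Matrix.reindex e e M) = Matrix.trace M := by
  simp only [Matrix.trace, Matrix.reindex_apply, Matrix.diag, Matrix.submatrix_apply]
  exact Equiv.sum_comp e.symm (fun j => M j j)

lemma trace_bigEmbed (m1 m2 u w : ℕ) (P) :
    Matrix.trace (bigEmbed m1 m2 u w P) =
      (u : ℂ) * (Matrix.trace P.1 * (m2 : ℂ)) + (w : ℂ) * ((m1 : ℂ) * Matrix.trace P.2) := by
  rw [bigEmbed_apply, trace_reindex', Matrix.trace_blockDiagonal]
  simp [blockFun, Fintype.sum_sum_type, Matrix.trace_kronecker, Matrix.trace_one,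
    Finset.sum_const, Finset.card_univ, nsmul_eq_mul]

lemma bigEmbed_injective (m1 m2 u w : ℕ) (hm1 : 0 < m1) (hm2 : 0 < m2)
    (hu : 0 < u) (hw : 0 < w) :
    Function.Injective (bigEmbed m1 m2 u w) := by
  rw [injective_iff_map_eq_zero]
  intro P hP
  rw [bigEmbed_apply] at hP
  have h0 : Matrix.blockDiagonal (blockFun m1 m2 u w P) = 0 := by
    apply (Matrix.reindex (bigIdx m1 m2 u w) (bigIdx m1 m2 u w)).injective
    rw [hP]
    ext i j
    simp
  have h1 : P.1 = 0 := by
    ext a a'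
    have := congrFun (congrFun h0 ((a, ⟨0, hm2⟩), Sum.inl ⟨0, hu⟩)) ((a', ⟨0, hm2⟩), Sum.inl ⟨0, hu⟩)
    simpa [Matrix.blockDiagonal_apply_eq, blockFun, Matrix.kroneckerMap_apply,
      Matrix.one_apply] using this
  have h2 : P.2 = 0 := by
    ext b b'
    have := congrFun (congrFun h0 (((⟨0, hm1⟩ : Fin m1), b), Sum.inr ⟨0, hw⟩))
      (((⟨0, hm1⟩ : Fin m1), b'), Sum.inr ⟨0, hw⟩)
    simpa [Matrix.blockDiagonal_apply_eq, blockFun, Matrix.kroneckerMap_apply,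
      Matrix.one_apply] using this
  exact Prod.ext h1 h2

lemma norm_bigEmbed (m1 m2 u w : ℕ) (hm1 : 0 < m1) (hm2 : 0 < m2)
    (hu : 0 < u) (hw : 0 < w) (P) :
    ‖bigEmbed m1 m2 u w P‖ = max ‖P.1‖ ‖P.2‖ := by
  rw [NonUnitalStarAlgHom.norm_map (bigEmbed m1 m2 u w)
    (bigEmbed_injective m1 m2 u w hm1 hm2 hu hw) P]
  rfl
/-- The MF-trace condition for `τ` relative to a generating tuple `x`. -/
def IsMFTrace {A : Type*} [NormedRing A] [StarRing A] [CStarRing A] [NormedAlgebra ℂ A]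
    {n : ℕ} (x : Fin n → A) (τ : A → ℂ) : Prop :=
  ∃ m : ℕ → ℕ, (∀ k, 0 < m k) ∧
    ∃ Amat : (k : ℕ) → Fin n → Matrix (Fin (m k)) (Fin (m k)) ℂ,
      ∀ p : FreeAlgebra ℂ (Fin n × Bool),
        Filter.Tendsto (fun k => ‖evalStarPoly (Amat k) p‖) Filter.atTop
          (nhds ‖evalStarPoly x p‖) ∧
        Filter.Tendsto (fun k => Matrix.trace (evalStarPoly (Amat k) p) / (m k : ℂ))
          Filter.atTop (nhds (τ (evalStarPoly x p)))

/-- If `τ` and `ρ` are MF-traces (tracial states arising as weak* limits of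
normalized matrix traces along topological-distribution-convergent microstate sequences
for a fixed generating tuple `x̄`), then for every rational `q ∈ [0,1]`, the tracial state
`q·τ + (1−q)·ρ` is again an MF-trace. -/
theorem stmt10 {A : Type*}
    [NormedRing A] [StarRing A] [CStarRing A] [NormedAlgebra ℂ A] [CompleteSpace A]
    [StarModule ℂ A]
    {n : ℕ} (x : Fin n → A)
    (hgen : (StarAlgebra.adjoin ℂ (Set.range x)).topologicalClosure = ⊤)
    (τ ρ : A →ₗ[ℂ] ℂ)
    (hτstate : τ 1 = 1 ∧ (∀ a : A, 0 ≤ (τ (star a * a)).re ∧ (τ (star a * a)).im = 0) ∧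
      ∀ a b : A, τ (a * b) = τ (b * a))
    (hρstate : ρ 1 = 1 ∧ (∀ a : A, 0 ≤ (ρ (star a * a)).re ∧ (ρ (star a * a)).im = 0) ∧
      ∀ a b : A, ρ (a * b) = ρ (b * a))
    (hτ : IsMFTrace x (fun a => τ a)) (hρ : IsMFTrace x (fun a => ρ a))
    (q : ℚ) (hq0 : 0 ≤ q) (hq1 : q ≤ 1) :
    IsMFTrace x (fun a => (q : ℂ) * τ a + ((1 : ℂ) - (q : ℂ)) * ρ a) := by
  by_cases hq0' : q = 0
  · subst hq0'
    have heq : (fun a => (((0 : ℚ) : ℂ)) * τ a + ((1 : ℂ) - ((0 : ℚ) : ℂ)) * ρ a)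
        = fun a => ρ a := by
      funext a; push_cast; ring
    rw [heq]
    exact hρ
  by_cases hq1' : q = 1
  · subst hq1'
    have heq : (fun a => (((1 : ℚ) : ℂ)) * τ a + ((1 : ℂ) - ((1 : ℚ) : ℂ)) * ρ a)
        = fun a => τ a := by
      funext a; push_cast; ring
    rw [heq]
    exact hτ
  obtain ⟨m1, hm1, Am, hA⟩ := hτ
  obtain ⟨m2, hm2, Bm, hB⟩ := hρ
  have hqpos : 0 < q := lt_of_le_of_ne hq0 (Ne.symm hq0')
  have hqlt : q < 1 := lt_of_le_of_ne hq1 hq1'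
  set u : ℕ := q.num.toNat with hu
  have hnum : (0 : ℤ) < q.num := Rat.num_pos.mpr hqpos
  have hucast : (u : ℤ) = q.num := Int.toNat_of_nonneg hnum.le
  have hdenlt : q.num < (q.den : ℤ) := Rat.num_lt_denom_iff.mpr hqlt
  have hult : u < q.den := by omega
  have hupos : 0 < u := by omega
  set w : ℕ := q.den - u with hw
  have hwpos : 0 < w := by omega
  have huw : u + w = q.den := by omega
  refine ⟨fun k => m1 k * m2 k * (u + w), fun k => by
      have := hm1 k; have := hm2 k; positivity,
    fun k i => bigEmbed (m1 k) (m2 k) u w (Am k i, Bm k i), fun p => ?_⟩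
  have key : ∀ k, evalStarPoly (fun i => bigEmbed (m1 k) (m2 k) u w (Am k i, Bm k i)) p
      = bigEmbed (m1 k) (m2 k) u w (evalStarPoly (Am k) p, evalStarPoly (Bm k) p) := by
    intro k
    rw [← evalStarPoly_prod, ← evalStarPoly_map]
  constructor
  · have hmax := (hA p).1.max (hB p).1
    rw [max_self] at hmax
    have heq : ∀ k, ‖evalStarPoly (fun i => bigEmbed (m1 k) (m2 k) u w (Am k i, Bm k i)) p‖
        = max ‖evalStarPoly (Am k) p‖ ‖evalStarPoly (Bm k) p‖ := by
      intro k
      rw [key k, norm_bigEmbed _ _ _ _ (hm1 k) (hm2 k) hupos hwpos]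
    simpa only [heq] using hmax
  · have hden0 : ((q.den : ℕ) : ℂ) ≠ 0 := Nat.cast_ne_zero.mpr q.den_pos.ne'
    have huwc : (((u + w : ℕ)) : ℂ) ≠ 0 := by
      rw [huw]; exact hden0
    have hexp : ∀ k,
        Matrix.trace (evalStarPoly (fun i => bigEmbed (m1 k) (m2 k) u w (Am k i, Bm k i)) p)
            / ((m1 k * m2 k * (u + w) : ℕ) : ℂ)
        = ((u : ℂ) / ((u + w : ℕ) : ℂ)) * (Matrix.trace (evalStarPoly (Am k) p) / (m1 k : ℂ))
          + ((w : ℂ) / ((u + w : ℕ) : ℂ)) * (Matrix.trace (evalStarPoly (Bm k) p) / (m2 k : ℂ)) := by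
      intro k
      have h1 : ((m1 k : ℂ)) ≠ 0 := Nat.cast_ne_zero.mpr (hm1 k).ne'
      have h2 : ((m2 k : ℂ)) ≠ 0 := Nat.cast_ne_zero.mpr (hm2 k).ne'
      rw [key k, trace_bigEmbed]
      push_cast
      push_cast at huwc
      field_simp
    have hc1 : ((u : ℂ) / ((u + w : ℕ) : ℂ)) = (q : ℂ) := by
      rw [Rat.cast_def, huw]
      norm_num
      rw [show ((u : ℂ)) = ((q.num : ℤ) : ℂ) by exact_mod_cast congrArg (fun z : ℤ => (z : ℂ)) hucast]
    have hc2 : ((w : ℂ) / ((u + w : ℕ) : ℂ)) = (1 : ℂ) - (q : ℂ) := by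
      have hwc : ((w : ℂ)) = ((q.den : ℂ)) - ((q.num : ℂ)) := by
        have : (w : ℤ) = (q.den : ℤ) - q.num := by omega
        exact_mod_cast congrArg (fun z : ℤ => (z : ℂ)) this
      rw [huw, hwc, Rat.cast_def]
      field_simp
    have hlim := ((hA p).2.const_mul ((u : ℂ) / ((u + w : ℕ) : ℂ))).add
      ((hB p).2.const_mul ((w : ℂ) / ((u + w : ℕ) : ℂ)))
    simp only [hc1, hc2] at hlim
    simpa only [hexp, hc1, hc2] using hlim
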